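/- arXiv:1508.06915 — 2 statements merged into one kernel-verified Lean document; each statement's English description precedes it below -/
import Mathlib

section
/- For dimension d ≥ 3 the integral I(0) = (2π)^{−d} ∫_{[−π,π]^d} Φ(φ)^{−1} dφ is finite, while for d = 1 and d = 2 it is infinite. Equivalently, the function φ ↦ 1/Φ(φ) is integrable on [−π,π]^d if and only if d ≥ 3. -/
open MeasureTheory Real Filter
open scoped ENNReal

noncomputable section

/-- The Fourier symbol `Φ(φ) = 2 ∑_j (1 - cos φ_j)` of the negative discrete Laplacian on `ℤ^d`. -/
def Phi (d : ℕ) (φ : Fin d → ℝ) : ℝ := 2 * ∑ j, (1 - Real.cos (φ j))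

/-- The cube `[-π, π]^d`. -/
def cube (d : ℕ) : Set (Fin d → ℝ) := Set.univ.pi fun _ => Set.Icc (-π) π

/-- `I(λ) = (2π)^{-d} ∫_{[-π,π]^d} (λ + Φ(φ))⁻¹ dφ` (Bochner integral, real-valued). -/
def Ir (d : ℕ) (lam : ℝ) : ℝ := ((2 * π) ^ d)⁻¹ * ∫ φ in cube d, (lam + Phi d φ)⁻¹

/-- `I(λ)` as an extended-nonnegative-real, `I(λ) = (2π)^{-d} ∫_{[-π,π]^d} (λ + Φ(φ))⁻¹ dφ`. -/
def IE (d : ℕ) (lam : ℝ) : ℝ≥0∞ :=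
  (∫⁻ φ in cube d, ENNReal.ofReal ((lam + Phi d φ)⁻¹)) / ENNReal.ofReal ((2 * π) ^ d)

section Polar
open Set Metric

variable {E : Type*} [NormedAddCommGroup E] [NormedSpace ℝ E] [MeasurableSpace E]
  [BorelSpace E] [FiniteDimensional ℝ E] [Nontrivial E]
  (μ : Measure E) [μ.IsAddHaarMeasure]

lemma lintegral_fun_norm_haar (g : ℝ → ℝ≥0∞) (hg : Measurable g) :
    ∫⁻ x, g ‖x‖ ∂μ = μ.toSphere univ *
      ∫⁻ r in Ioi (0:ℝ), ENNReal.ofReal (r ^ (Module.finrank ℝ E - 1)) * g r := by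
  have hmeas : Measurable fun p : sphere (0:E) 1 × Ioi (0:ℝ) => g p.2 :=
    hg.comp (measurable_subtype_coe.comp measurable_snd)
  calc ∫⁻ x, g ‖x‖ ∂μ = ∫⁻ x : ({0}ᶜ : Set E), g ‖x.1‖ ∂(μ.comap (↑)) := by
        rw [lintegral_subtype_comap (measurableSet_singleton (0:E)).compl (fun a => g ‖a‖),
          MeasureTheory.restrict_compl_singleton]
    _ = ∫⁻ p : sphere (0:E) 1 × Ioi (0:ℝ), g p.2
          ∂(μ.toSphere.prod (.volumeIoiPow (Module.finrank ℝ E - 1))) := by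
        rw [← μ.measurePreserving_homeomorphUnitSphereProd.lintegral_comp hmeas]
        simp [homeomorphUnitSphereProd, homeomorphSphereProd_apply_snd_coe]
    _ = μ.toSphere univ * ∫⁻ r : Ioi (0:ℝ), g r ∂(.volumeIoiPow (Module.finrank ℝ E - 1)) := by
        rw [lintegral_prod _ hmeas.aemeasurable]
        simp [lintegral_const, mul_comm]
    _ = _ := by
        congr 1
        rw [Measure.volumeIoiPow]
        rw [lintegral_withDensity_eq_lintegral_mul _
          (f := fun r : Ioi (0:ℝ) => ENNReal.ofReal (r.1 ^ (Module.finrank ℝ E - 1)))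
          (by fun_prop) (show Measurable fun r : Ioi (0:ℝ) => g r.1 from hg.comp measurable_subtype_coe)]
        rw [show ((fun r : Ioi (0:ℝ) => ENNReal.ofReal (r.1 ^ (Module.finrank ℝ E - 1))) *
            fun r : Ioi (0:ℝ) => g r.1) = fun r : Ioi (0:ℝ) =>
            ENNReal.ofReal (r.1 ^ (Module.finrank ℝ E - 1)) * g r.1 from rfl]
        rw [lintegral_subtype_comap measurableSet_Ioi
          (fun r => ENNReal.ofReal (r ^ (Module.finrank ℝ E - 1)) * g r)]

end Polar

lemma phi_nonneg (d : ℕ) (φ : Fin d → ℝ) : 0 ≤ Phi d φ := by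
  have : ∀ j ∈ Finset.univ, (0:ℝ) ≤ 1 - Real.cos (φ j) := fun j _ => by
    have := Real.cos_le_one (φ j); linarith
  have := Finset.sum_nonneg this
  unfold Phi; linarith

lemma phi_continuous (d : ℕ) : Continuous (Phi d) := by
  unfold Phi
  exact continuous_const.mul (continuous_finset_sum _ fun j _ =>
    continuous_const.sub (Real.continuous_cos.comp (continuous_apply j)))

lemma cube_measurable (d : ℕ) : MeasurableSet (cube d) :=
  MeasurableSet.univ_pi fun _ => measurableSet_Icc

lemma cube_eq (d : ℕ) : cube d = Metric.closedBall (0 : Fin d → ℝ) π := by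
  ext φ
  simp only [cube, Set.mem_pi, Set.mem_univ, forall_true_left, Set.mem_Icc,
    Metric.mem_closedBall, dist_zero_right,
    pi_norm_le_iff_of_nonneg Real.pi_pos.le, Real.norm_eq_abs, abs_le]

lemma mem_cube_abs {d : ℕ} {φ : Fin d → ℝ} (hφ : φ ∈ cube d) (j : Fin d) : |φ j| ≤ π := by
  simp only [cube, Set.mem_pi, Set.mem_univ, forall_true_left, Set.mem_Icc] at hφ
  exact abs_le.2 (hφ j)

lemma sq_norm_le_sum {d : ℕ} (φ : Fin d → ℝ) : ‖φ‖ ^ 2 ≤ ∑ j, φ j ^ 2 := by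
  have h : ‖φ‖ ≤ Real.sqrt (∑ j, φ j ^ 2) := by
    refine (pi_norm_le_iff_of_nonneg (Real.sqrt_nonneg _)).2 fun i => ?_
    rw [Real.norm_eq_abs, ← Real.sqrt_sq_eq_abs]
    exact Real.sqrt_le_sqrt (Finset.single_le_sum (f := fun j => φ j ^ 2)
      (fun j _ => sq_nonneg _) (Finset.mem_univ i))
  calc ‖φ‖ ^ 2 ≤ Real.sqrt (∑ j, φ j ^ 2) ^ 2 := by
        exact pow_le_pow_left₀ (norm_nonneg _) h 2
    _ = ∑ j, φ j ^ 2 := Real.sq_sqrt (Finset.sum_nonneg fun j _ => sq_nonneg _)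

lemma sum_le_sq_norm {d : ℕ} (φ : Fin d → ℝ) : ∑ j, φ j ^ 2 ≤ d * ‖φ‖ ^ 2 := by
  calc ∑ j, φ j ^ 2 ≤ ∑ _j : Fin d, ‖φ‖ ^ 2 := by
        refine Finset.sum_le_sum fun j _ => ?_
        have h := norm_le_pi_norm φ j
        rw [Real.norm_eq_abs] at h
        calc φ j ^ 2 = |φ j| ^ 2 := (sq_abs _).symm
          _ ≤ ‖φ‖ ^ 2 := pow_le_pow_left₀ (abs_nonneg _) h 2
    _ = d * ‖φ‖ ^ 2 := by simp [Finset.sum_const, Finset.card_univ]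

lemma le_phi {d : ℕ} {φ : Fin d → ℝ} (hφ : φ ∈ cube d) :
    (4 / π ^ 2) * ∑ j, φ j ^ 2 ≤ Phi d φ := by
  unfold Phi
  rw [Finset.mul_sum, Finset.mul_sum]
  refine Finset.sum_le_sum fun j _ => ?_
  have h := Real.cos_le_one_sub_mul_cos_sq (mem_cube_abs hφ j)
  have hπ := Real.pi_pos
  have : 2 / π ^ 2 * φ j ^ 2 ≤ 1 - Real.cos (φ j) := by linarith
  calc 4 / π ^ 2 * φ j ^ 2 = 2 * (2 / π ^ 2 * φ j ^ 2) := by ring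
    _ ≤ 2 * (1 - Real.cos (φ j)) := by linarith

lemma phi_le {d : ℕ} (φ : Fin d → ℝ) : Phi d φ ≤ ∑ j, φ j ^ 2 := by
  unfold Phi
  rw [Finset.mul_sum]
  refine Finset.sum_le_sum fun j _ => ?_
  rcases eq_or_ne (φ j) 0 with h | h
  · simp [h]
  · have := Real.one_sub_sq_div_two_lt_cos h
    linarith

lemma phi_pos {d : ℕ} {φ : Fin d → ℝ} (hφ : φ ∈ cube d) (h0 : φ ≠ 0) : 0 < Phi d φ := by
  have hn : 0 < ‖φ‖ := norm_pos_iff.2 h0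
  have h1 : (4 / π ^ 2) * ‖φ‖ ^ 2 ≤ Phi d φ := by
    calc (4 / π ^ 2) * ‖φ‖ ^ 2 ≤ (4 / π ^ 2) * ∑ j, φ j ^ 2 := by
          have hπ := Real.pi_pos
          have := sq_norm_le_sum φ
          have h4 : (0:ℝ) < 4 / π ^ 2 := by positivity
          nlinarith
      _ ≤ Phi d φ := le_phi hφ
  have hπ := Real.pi_pos
  have hp : (0:ℝ) < (4 / π ^ 2) * ‖φ‖ ^ 2 :=
    mul_pos (div_pos four_pos (pow_pos hπ 2)) (pow_pos hn 2)
  linarith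

lemma inv_phi_le {d : ℕ} {φ : Fin d → ℝ} (hφ : φ ∈ cube d) :
    (Phi d φ)⁻¹ ≤ (π ^ 2 / 4) * (‖φ‖ ^ 2)⁻¹ := by
  rcases eq_or_ne φ 0 with rfl | h0
  · simp [Phi]
  · have hn : 0 < ‖φ‖ := norm_pos_iff.2 h0
    have hπ := Real.pi_pos
    have h1 : (4 / π ^ 2) * ‖φ‖ ^ 2 ≤ Phi d φ := by
      calc (4 / π ^ 2) * ‖φ‖ ^ 2 ≤ (4 / π ^ 2) * ∑ j, φ j ^ 2 := by
            have := sq_norm_le_sum φ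
            have h4 : (0:ℝ) < 4 / π ^ 2 := by positivity
            nlinarith
        _ ≤ Phi d φ := le_phi hφ
    have hpos : (0:ℝ) < (4 / π ^ 2) * ‖φ‖ ^ 2 := by positivity
    calc (Phi d φ)⁻¹ ≤ ((4 / π ^ 2) * ‖φ‖ ^ 2)⁻¹ := by
          exact inv_anti₀ hpos h1
      _ = (π ^ 2 / 4) * (‖φ‖ ^ 2)⁻¹ := by
          field_simp

lemma inv_le_inv_phi {d : ℕ} {φ : Fin d → ℝ} (hφ : φ ∈ cube d) :
    ((d:ℝ) * ‖φ‖ ^ 2)⁻¹ ≤ (Phi d φ)⁻¹ := by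
  rcases eq_or_ne φ 0 with rfl | h0
  · simp [Phi]
  · refine inv_anti₀ (phi_pos hφ h0) ?_
    calc Phi d φ ≤ ∑ j, φ j ^ 2 := phi_le φ
      _ ≤ d * ‖φ‖ ^ 2 := sum_le_sq_norm φ

lemma L_lt_top {d : ℕ} (hd : 1 ≤ d) (hd3 : 3 ≤ d) :
    (∫⁻ φ in cube d, ENNReal.ofReal ((Phi d φ)⁻¹)) < ⊤ := by
  haveI : Nonempty (Fin d) := Fin.pos_iff_nonempty.1 hd
  set C : ℝ := π ^ 2 / 4 with hC
  have hCpos : 0 < C := by positivity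
  set g : ℝ → ℝ≥0∞ :=
    (Set.Iic π).indicator (fun r => ENNReal.ofReal (C * (r ^ 2)⁻¹)) with hg
  have hgm : Measurable g :=
    ((measurable_const.mul ((measurable_id.pow_const 2).inv)).ennreal_ofReal).indicator
      measurableSet_Iic
  have step1 : (∫⁻ φ in cube d, ENNReal.ofReal ((Phi d φ)⁻¹)) ≤ ∫⁻ x : Fin d → ℝ, g ‖x‖ := by
    have h := setLIntegral_mono' (μ := volume) (cube_measurable d)
      (fun φ hφ => ENNReal.ofReal_le_ofReal (inv_phi_le hφ))
    refine h.trans (le_of_eq ?_)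
    rw [← lintegral_indicator (by rw [cube_eq]; exact Metric.isClosed_closedBall.measurableSet)]
    refine lintegral_congr fun x => ?_
    have hcube : x ∈ cube d ↔ ‖x‖ ≤ π := by
      rw [cube_eq]; simp [Metric.mem_closedBall, dist_zero_right]
    by_cases hx : ‖x‖ ≤ π
    · rw [Set.indicator_of_mem (hcube.2 hx), hg, Set.indicator_of_mem (Set.mem_Iic.2 hx)]
    · rw [Set.indicator_of_notMem (fun h => hx (hcube.1 h)), hg,
        Set.indicator_of_notMem (by simpa using hx)]
  have hpolar := lintegral_fun_norm_haar (volume : Measure (Fin d → ℝ)) g hgm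
  simp only [Module.finrank_fin_fun] at hpolar
  have hFi : (∫⁻ r in Set.Ioi (0:ℝ), ENNReal.ofReal (r ^ (d - 1)) * g r) < ⊤ := by
    rw [← Set.Ioc_union_Ioi_eq_Ioi Real.pi_pos.le,
      lintegral_union measurableSet_Ioi (Set.Ioc_disjoint_Ioi le_rfl)]
    have h2 : (∫⁻ r in Set.Ioi π, ENNReal.ofReal (r ^ (d - 1)) * g r) = 0 := by
      rw [setLIntegral_congr_fun measurableSet_Ioi
        (fun r hr => ?_), lintegral_zero]
      have : r ∉ Set.Iic π := by simpa using hr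
      rw [hg, Set.indicator_of_notMem this, mul_zero]
    have h1 : (∫⁻ r in Set.Ioc (0:ℝ) π, ENNReal.ofReal (r ^ (d - 1)) * g r) ≤
        ENNReal.ofReal (C * π ^ (d - 3)) * volume (Set.Ioc (0:ℝ) π) := by
      rw [← setLIntegral_const]
      refine setLIntegral_mono' measurableSet_Ioc fun r hr => ?_
      have hr0 : 0 < r := hr.1
      rw [hg, Set.indicator_of_mem (Set.mem_Iic.2 hr.2),
        ← ENNReal.ofReal_mul (by positivity)]
      apply ENNReal.ofReal_le_ofReal
      have hpow : r ^ (d - 1) * (C * (r ^ 2)⁻¹) = C * r ^ (d - 3) := by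
        have h3 : d - 1 = (d - 3) + 2 := by omega
        rw [h3, pow_add]
        field_simp
      rw [hpow]
      exact mul_le_mul_of_nonneg_left (pow_le_pow_left₀ hr0.le hr.2 (d - 3)) hCpos.le
    rw [h2, add_zero]
    refine h1.trans_lt (ENNReal.mul_lt_top ENNReal.ofReal_lt_top ?_)
    rw [Real.volume_Ioc]
    exact ENNReal.ofReal_lt_top
  exact step1.trans_lt (hpolar ▸ ENNReal.mul_lt_top (measure_lt_top _ _) hFi)

lemma top_Ioo : (∫⁻ r in Set.Ioo (0:ℝ) 1, ENNReal.ofReal ((2 * r)⁻¹)) = ⊤ := by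
  by_contra h
  have hlt : (∫⁻ r in Set.Ioo (0:ℝ) 1, ENNReal.ofReal ((2 * r)⁻¹)) < ⊤ := lt_top_iff_ne_top.2 h
  have hI : IntegrableOn (fun r : ℝ => (2 * r)⁻¹) (Set.Ioo 0 1) := by
    refine ⟨((measurable_const.mul measurable_id).inv).aestronglyMeasurable, ?_⟩
    rw [hasFiniteIntegral_iff_ofReal ?_]
    · exact hlt
    · filter_upwards [ae_restrict_mem measurableSet_Ioo] with r hr
      have : (0:ℝ) < r := hr.1
      positivity
  have hI2 : IntegrableOn (fun r : ℝ => r⁻¹) (Set.Ioo (0:ℝ) 1) := by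
    have h2 := hI.const_mul 2
    have hfun : (fun r : ℝ => 2 * (2 * r)⁻¹) = fun r : ℝ => r⁻¹ := funext fun r => by
      rw [mul_inv, ← mul_assoc, mul_inv_cancel₀ two_ne_zero, one_mul]
    rwa [hfun] at h2
  have hI3 : IntegrableOn (fun r : ℝ => r ^ (-1:ℝ)) (Set.Ioo (0:ℝ) 1) := by
    refine hI2.congr_fun (fun r hr => ?_) measurableSet_Ioo
    rw [show ((-1:ℝ)) = ((-1:ℤ):ℝ) by norm_num, Real.rpow_intCast]
    simp
  rw [intervalIntegral.integrableOn_Ioo_rpow_iff zero_lt_one] at hI3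
  exact lt_irrefl _ hI3

lemma L_eq_top {d : ℕ} (hd : 1 ≤ d) (hd3 : d < 3) :
    (∫⁻ φ in cube d, ENNReal.ofReal ((Phi d φ)⁻¹)) = ⊤ := by
  haveI : Nonempty (Fin d) := Fin.pos_iff_nonempty.1 hd
  set g : ℝ → ℝ≥0∞ :=
    (Set.Iio π).indicator (fun r => ENNReal.ofReal (((d:ℝ) * r ^ 2)⁻¹)) with hg
  have hgm : Measurable g :=
    ((measurable_const.mul (measurable_id.pow_const 2)).inv.ennreal_ofReal).indicator
      measurableSet_Iio
  have hball : Metric.ball (0 : Fin d → ℝ) π ⊆ cube d := by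
    rw [cube_eq]; exact Metric.ball_subset_closedBall
  have step1 : (∫⁻ x : Fin d → ℝ, g ‖x‖) ≤
      ∫⁻ φ in cube d, ENNReal.ofReal ((Phi d φ)⁻¹) := by
    have h1 : (∫⁻ x : Fin d → ℝ, g ‖x‖) =
        ∫⁻ x in Metric.ball (0 : Fin d → ℝ) π, ENNReal.ofReal (((d:ℝ) * ‖x‖ ^ 2)⁻¹) := by
      rw [← lintegral_indicator measurableSet_ball]
      refine lintegral_congr fun x => ?_
      by_cases hx : ‖x‖ < π
      · rw [hg, Set.indicator_of_mem (Set.mem_Iio.2 hx),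
          Set.indicator_of_mem (mem_ball_zero_iff.2 hx)]
      · rw [hg, Set.indicator_of_notMem (by simpa using hx),
          Set.indicator_of_notMem (fun h => hx (mem_ball_zero_iff.1 h))]
    rw [h1]
    refine le_trans (setLIntegral_mono' measurableSet_ball fun x hx =>
      ENNReal.ofReal_le_ofReal (inv_le_inv_phi (hball hx))) (lintegral_mono_set hball)
  have hinner : (∫⁻ r in Set.Ioi (0:ℝ), ENNReal.ofReal (r ^ (d - 1)) * g r) = ⊤ := by
    rw [eq_top_iff]
    have hpt : ∀ r ∈ Set.Ioo (0:ℝ) 1,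
        ENNReal.ofReal ((2 * r)⁻¹) ≤ ENNReal.ofReal (r ^ (d - 1)) * g r := by
      intro r hr
      have hr0 : 0 < r := hr.1
      have hr1 : r < 1 := hr.2
      have hrπ : r < π := hr1.trans (by linarith [Real.pi_gt_three])
      rw [hg, Set.indicator_of_mem (Set.mem_Iio.2 hrπ),
        ← ENNReal.ofReal_mul (by positivity)]
      apply ENNReal.ofReal_le_ofReal
      interval_cases d
      · have h1 : r ^ (1 - 1) * (((1:ℕ):ℝ) * r ^ 2)⁻¹ = (r ^ 2)⁻¹ := by norm_num
        rw [h1]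
        exact inv_anti₀ (by positivity) (by nlinarith)
      · have h1 : r ^ (2 - 1) * (((2:ℕ):ℝ) * r ^ 2)⁻¹ = (2 * r)⁻¹ := by
          norm_num
          field_simp
        rw [h1]
    refine le_trans (le_of_eq top_Ioo.symm) (le_trans
      (setLIntegral_mono' measurableSet_Ioo hpt) (lintegral_mono_set Set.Ioo_subset_Ioi_self))
  have hne : (volume : Measure (Fin d → ℝ)).toSphere Set.univ ≠ 0 := by
    rw [Measure.toSphere_apply_univ]
    refine mul_ne_zero ?_ (Metric.measure_ball_pos volume 0 one_pos).ne'
    simp only [Module.finrank_fin_fun, ne_eq, Nat.cast_eq_zero]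
    omega
  have hpolar := lintegral_fun_norm_haar (volume : Measure (Fin d → ℝ)) g hgm
  simp only [Module.finrank_fin_fun] at hpolar
  rw [eq_top_iff]
  calc (⊤:ℝ≥0∞) = (volume : Measure (Fin d → ℝ)).toSphere Set.univ * ⊤ :=
        (ENNReal.mul_top hne).symm
    _ = ∫⁻ x : Fin d → ℝ, g ‖x‖ := by rw [hpolar, hinner]
    _ ≤ _ := step1


/-- for `d ≥ 3` the integral `I(0)` is finite, while for `d = 1, 2` it is
infinite; equivalently, `φ ↦ 1/Φ(φ)` is integrable on `[-π,π]^d` iff `d ≥ 3`. -/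
theorem I_zero_finite_iff (d : ℕ) (hd : 1 ≤ d) :
    (IE d 0 < ⊤ ↔ 3 ≤ d) ∧
      (IntegrableOn (fun φ => (Phi d φ)⁻¹) (cube d) ↔ 3 ≤ d) := by
  have key : (∫⁻ φ in cube d, ENNReal.ofReal ((Phi d φ)⁻¹)) < ⊤ ↔ 3 ≤ d := by
    constructor
    · intro h
      by_contra h3
      rw [L_eq_top hd (by omega)] at h
      exact lt_irrefl _ h
    · exact L_lt_top hd
  constructor
  · have hIE : IE d 0 = (∫⁻ φ in cube d, ENNReal.ofReal ((Phi d φ)⁻¹)) /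
        ENNReal.ofReal ((2 * π) ^ d) := by simp [IE]
    rw [hIE]
    have hc0 : ENNReal.ofReal ((2 * π) ^ d) ≠ 0 := by
      rw [ne_eq, ENNReal.ofReal_eq_zero, not_le]
      positivity
    constructor
    · intro h
      rw [← key]
      by_contra hL
      rw [not_lt, top_le_iff] at hL
      rw [hL, ENNReal.top_div_of_ne_top ENNReal.ofReal_ne_top] at h
      exact lt_irrefl _ h
    · intro h
      exact ENNReal.div_lt_top (key.2 h).ne hc0
  · have hmeas : AEStronglyMeasurable (fun φ => (Phi d φ)⁻¹)
        (volume.restrict (cube d)) :=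
      ((phi_continuous d).measurable.inv).aestronglyMeasurable
    have hnn : 0 ≤ᵐ[volume.restrict (cube d)] fun φ => (Phi d φ)⁻¹ :=
      ae_of_all _ fun φ => inv_nonneg.2 (phi_nonneg d φ)
    rw [← key]
    constructor
    · intro h
      exact (hasFiniteIntegral_iff_ofReal hnn).1 h.2
    · intro h
      exact ⟨hmeas, (hasFiniteIntegral_iff_ofReal hnn).2 h⟩
end
end

section
/- For d = 3, the function I satisfies lim_{λ→0+} (I(0) − I(λ))/√λ = 1/(4π); that is, I(λ) = I(0) − √λ/(4π) + o(√λ) as λ → 0+. -/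
open MeasureTheory Real Filter
open scoped ENNReal

noncomputable section

namespace IA

/-! ### Basic objects -/

def q (ψ : Fin 3 → ℝ) : ℝ := ∑ j, ψ j ^ 2

def hfun (t : ℝ) : ℝ := min (|t| ^ (-(2:ℝ)/3)) (|t| ^ (-(4:ℝ)/3))

def L (ψ : Fin 3 → ℝ) : ℝ := (q ψ)⁻¹ * (1 + q ψ)⁻¹

lemma q_nonneg (ψ : Fin 3 → ℝ) : 0 ≤ q ψ :=
  Finset.sum_nonneg fun _ _ => sq_nonneg _

lemma q_pos {ψ : Fin 3 → ℝ} (hψ : ∀ j, ψ j ≠ 0) : 0 < q ψ := by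
  have h0 : (ψ 0) ^ 2 ≤ q ψ := by
    refine Finset.single_le_sum (f := fun j => ψ j ^ 2) (fun _ _ => sq_nonneg _) (Finset.mem_univ 0)
  have := pow_pos (abs_pos.mpr (hψ 0)) 2
  rw [← sq_abs] at h0
  linarith

lemma q_smul (t : ℝ) (ψ : Fin 3 → ℝ) : q (t • ψ) = t ^ 2 * q ψ := by
  simp [q, Finset.mul_sum, mul_pow]

lemma continuous_Phi (d : ℕ) : Continuous (Phi d) := by
  unfold Phi; fun_prop

lemma Phi_nonneg (d : ℕ) (φ : Fin d → ℝ) : 0 ≤ Phi d φ := by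
  unfold Phi
  have : ∀ j ∈ Finset.univ, (0:ℝ) ≤ 1 - Real.cos (φ j) := fun j _ => by
    have := Real.cos_le_one (φ j); linarith
  have := Finset.sum_nonneg this
  linarith

lemma measurableSet_cube : MeasurableSet (cube 3) :=
  MeasurableSet.univ_pi fun _ => measurableSet_Icc

lemma k_q_le_Phi {φ : Fin 3 → ℝ} (hφ : φ ∈ cube 3) : 4 / π ^ 2 * q φ ≤ Phi 3 φ := by
  rw [Phi, q, Finset.mul_sum, Finset.mul_sum]
  refine Finset.sum_le_sum fun j _ => ?_
  have hj : φ j ∈ Set.Icc (-π) π := hφ j (Set.mem_univ j)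
  have habs : |φ j| ≤ π := abs_le.mpr ⟨hj.1, hj.2⟩
  have h1 := Real.cos_le_one_sub_mul_cos_sq habs
  have hπ := Real.pi_pos
  have h2 : 2 / π ^ 2 * φ j ^ 2 ≤ 1 - Real.cos (φ j) := by linarith
  rw [div_mul_eq_mul_div, div_le_iff₀ (by positivity)] at h2 ⊢
  nlinarith [h2]

lemma ae_ne : ∀ᵐ ψ : Fin 3 → ℝ, ∀ j, ψ j ≠ 0 := by
  rw [MeasureTheory.ae_all_iff]
  intro j
  rw [ae_iff]
  have h1 : {ψ : Fin 3 → ℝ | ¬ψ j ≠ 0}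
      = (LinearMap.ker (LinearMap.proj (R := ℝ) (φ := fun _ : Fin 3 => ℝ) j) : Set (Fin 3 → ℝ)) := by
    ext ψ; simp [LinearMap.mem_ker]
  rw [h1]
  refine Measure.addHaar_submodule _ _ ?_
  intro h
  have hmem : (Pi.single j 1 : Fin 3 → ℝ) ∈
      LinearMap.ker (LinearMap.proj (R := ℝ) (φ := fun _ : Fin 3 => ℝ) j) := by
    rw [h]; exact Submodule.mem_top
  simp [LinearMap.mem_ker] at hmem

/-! ### The dominating function and its integrability -/

lemma hfun_nonneg (t : ℝ) : 0 ≤ hfun t :=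
  le_min (Real.rpow_nonneg (abs_nonneg t) _) (Real.rpow_nonneg (abs_nonneg t) _)

lemma measurable_hfun : Measurable hfun := by
  unfold hfun; measurability

lemma integrableOn_h0_Ici :
    IntegrableOn (fun t : ℝ => min (t ^ (-(2:ℝ)/3)) (t ^ (-(4:ℝ)/3))) (Set.Ici 0) := by
  have hmeas : Measurable fun t : ℝ => min (t ^ (-(2:ℝ)/3)) (t ^ (-(4:ℝ)/3)) := by measurability
  have h1 : IntegrableOn (fun t : ℝ => min (t ^ (-(2:ℝ)/3)) (t ^ (-(4:ℝ)/3))) (Set.Icc 0 1) := by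
    have hI : IntegrableOn (fun t : ℝ => t ^ (-(2:ℝ)/3)) (Set.Icc 0 1) := by
      rw [integrableOn_Icc_iff_integrableOn_Ioc]
      exact (intervalIntegrable_iff_integrableOn_Ioc_of_le zero_le_one).mp
        (intervalIntegral.intervalIntegrable_rpow' (by norm_num))
    refine hI.mono' hmeas.aestronglyMeasurable ?_
    rw [ae_restrict_iff' measurableSet_Icc]
    refine MeasureTheory.ae_of_all _ fun t ht => ?_
    have h0 : 0 ≤ min (t ^ (-(2:ℝ)/3)) (t ^ (-(4:ℝ)/3)) :=
      le_min (Real.rpow_nonneg ht.1 _) (Real.rpow_nonneg ht.1 _)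
    rw [Real.norm_eq_abs, abs_of_nonneg h0]
    exact min_le_left _ _
  have h2 : IntegrableOn (fun t : ℝ => min (t ^ (-(2:ℝ)/3)) (t ^ (-(4:ℝ)/3))) (Set.Ioi 1) := by
    have hI : IntegrableOn (fun t : ℝ => t ^ (-(4:ℝ)/3)) (Set.Ioi 1) :=
      integrableOn_Ioi_rpow_of_lt (by norm_num) zero_lt_one
    refine hI.mono' hmeas.aestronglyMeasurable ?_
    rw [ae_restrict_iff' measurableSet_Ioi]
    refine MeasureTheory.ae_of_all _ fun t ht => ?_
    have ht0 : (0:ℝ) ≤ t := le_of_lt (lt_trans zero_lt_one ht)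
    have h0 : 0 ≤ min (t ^ (-(2:ℝ)/3)) (t ^ (-(4:ℝ)/3)) :=
      le_min (Real.rpow_nonneg ht0 _) (Real.rpow_nonneg ht0 _)
    rw [Real.norm_eq_abs, abs_of_nonneg h0]
    exact min_le_right _ _
  have hU : Set.Ici (0:ℝ) = Set.Icc 0 1 ∪ Set.Ioi 1 := by
    ext t
    simp only [Set.mem_Ici, Set.mem_union, Set.mem_Icc, Set.mem_Ioi]
    constructor
    · intro h; rcases le_or_gt t 1 with h'|h'
      · exact Or.inl ⟨h, h'⟩
      · exact Or.inr h'
    · rintro (⟨h, _⟩|h)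
      · exact h
      · linarith
  rw [hU]
  exact h1.union h2

lemma integrable_hfun : Integrable hfun := by
  set F : ℝ → ℝ := (Set.Ici (0:ℝ)).indicator
    (fun t => min (t ^ (-(2:ℝ)/3)) (t ^ (-(4:ℝ)/3))) with hF
  have hFint : Integrable F := (integrable_indicator_iff measurableSet_Ici).mpr integrableOn_h0_Ici
  have hFneg : Integrable (fun t => F (-t)) := by
    have h := (MeasureTheory.integrable_comp_mul_left_iff F (R := (-1:ℝ)) (by norm_num)).mpr hFint
    simpa using h
  have hFnonneg : ∀ t, 0 ≤ F t := by
    intro t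
    refine Set.indicator_nonneg (fun s hs => ?_) t
    exact le_min (Real.rpow_nonneg hs _) (Real.rpow_nonneg hs _)
  refine (hFint.add hFneg).mono' measurable_hfun.aestronglyMeasurable
    (MeasureTheory.ae_of_all _ fun t => ?_)
  rw [Real.norm_eq_abs, abs_of_nonneg (hfun_nonneg t)]
  rcases le_or_gt 0 t with h|h
  · have hmem : F t = hfun t := by
      rw [hF, Set.indicator_of_mem (Set.mem_Ici.mpr h), hfun, abs_of_nonneg h]
    have := hFnonneg (-t)
    simp only [Pi.add_apply]
    linarith [hmem.ge]
  · have hmem : F (-t) = hfun t := by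
      rw [hF, Set.indicator_of_mem (Set.mem_Ici.mpr (by linarith)), hfun, abs_of_neg h]
    have := hFnonneg t
    simp only [Pi.add_apply]
    linarith [hmem.ge]

lemma integrable_prod_hfun {c : ℝ} (hc : c ≠ 0) :
    Integrable (fun ψ : Fin 3 → ℝ => ∏ j, hfun (c * ψ j)) := by
  refine MeasureTheory.Integrable.fintype_prod (𝕜 := ℝ) (f := fun _ t => hfun (c * t)) fun _ => ?_
  exact (MeasureTheory.integrable_comp_mul_left_iff hfun hc).mpr integrable_hfun

/-! ### Product domination of `L` -/

lemma hfun_eq {a : ℝ} (ha : 0 < a) :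
    a ^ (-(2:ℝ)/3) * (max 1 (a ^ ((2:ℝ)/3)))⁻¹ = min (a ^ (-(2:ℝ)/3)) (a ^ (-(4:ℝ)/3)) := by
  rcases le_total 1 a with h1 | h1
  · have hx : 1 ≤ a ^ ((2:ℝ)/3) := Real.one_le_rpow h1 (by norm_num)
    rw [max_eq_right hx]
    have hinv : (a ^ ((2:ℝ)/3))⁻¹ = a ^ (-((2:ℝ)/3)) := (Real.rpow_neg ha.le _).symm
    rw [hinv, ← Real.rpow_add ha]
    have hmin : min (a ^ (-(2:ℝ)/3)) (a ^ (-(4:ℝ)/3)) = a ^ (-(4:ℝ)/3) := by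
      rw [min_eq_right]
      exact Real.rpow_le_rpow_of_exponent_le h1 (by norm_num)
    rw [hmin]
    norm_num
  · have hx : a ^ ((2:ℝ)/3) ≤ 1 := Real.rpow_le_one ha.le h1 (by norm_num)
    rw [max_eq_left hx, inv_one, mul_one]
    rw [min_eq_left]
    exact Real.rpow_le_rpow_of_exponent_ge ha h1 (by norm_num)

lemma max_cube {x : ℝ} (hx : 0 ≤ x) : (max 1 x) ^ 3 = max 1 (x ^ 3) := by
  rcases le_total 1 x with h | h
  · rw [max_eq_right h, max_eq_right (one_le_pow₀ h)]
  · rw [max_eq_left h, one_pow, max_eq_left (pow_le_one₀ hx h)]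

lemma L_le_prod {ψ : Fin 3 → ℝ} (hψ : ∀ j, ψ j ≠ 0) :
    L ψ ≤ (1/3) * ∏ j, hfun (ψ j) := by
  set a : Fin 3 → ℝ := fun j => |ψ j| with ha_def
  have ha : ∀ j, 0 < a j := fun j => abs_pos.mpr (hψ j)
  have hq : q ψ = ∑ j, a j ^ 2 := by simp [q, ha_def, sq_abs]
  have hqpos : 0 < q ψ := q_pos hψ
  have hconv : ∀ j, ((a j ^ 2 : ℝ)) ^ ((1:ℝ)/3) = a j ^ ((2:ℝ)/3) := by
    intro j
    rw [← Real.rpow_natCast (a j) 2, ← Real.rpow_mul (ha j).le]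
    norm_num
  -- AM-GM
  have hgm : ∏ j, a j ^ ((2:ℝ)/3) ≤ 1/3 * q ψ := by
    have h := Real.geom_mean_le_arith_mean3_weighted (w₁ := 1/3) (w₂ := 1/3) (w₃ := 1/3)
      (p₁ := a 0 ^ 2) (p₂ := a 1 ^ 2) (p₃ := a 2 ^ 2)
      (by norm_num) (by norm_num) (by norm_num) (sq_nonneg _) (sq_nonneg _) (sq_nonneg _)
      (by norm_num)
    rw [hconv 0, hconv 1, hconv 2] at h
    rw [Fin.prod_univ_three, hq, Fin.sum_univ_three]
    linarith
  have hGpos : 0 < ∏ j, a j ^ ((2:ℝ)/3) :=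
    Finset.prod_pos fun j _ => Real.rpow_pos_of_pos (ha j) _
  -- inverse of AM-GM
  have hinv1 : (q ψ)⁻¹ ≤ 1/3 * ∏ j, a j ^ (-(2:ℝ)/3) := by
    have h3 : 3 * ∏ j, a j ^ ((2:ℝ)/3) ≤ q ψ := by linarith
    have := one_div_le_one_div_of_le (by positivity) h3
    rw [one_div, one_div] at this
    calc (q ψ)⁻¹ ≤ (3 * ∏ j, a j ^ ((2:ℝ)/3))⁻¹ := this
      _ = 1/3 * (∏ j, a j ^ ((2:ℝ)/3))⁻¹ := by rw [mul_inv]; ring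
      _ = 1/3 * ∏ j, a j ^ (-(2:ℝ)/3) := by
          rw [← Finset.prod_inv_distrib]
          congr 1
          refine Finset.prod_congr rfl fun j _ => ?_
          rw [← Real.rpow_neg (ha j).le]
          norm_num
  -- bound on (1 + q)⁻¹
  set M : ℝ := ∏ j, max 1 (a j ^ ((2:ℝ)/3)) with hM_def
  have hM1 : (1:ℝ) ≤ M := by
    rw [hM_def]
    calc (1:ℝ) = ∏ _j : Fin 3, 1 := by simp
      _ ≤ ∏ j, max 1 (a j ^ ((2:ℝ)/3)) :=
          Finset.prod_le_prod (fun _ _ => zero_le_one) (fun j _ => le_max_left _ _)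
  have hMle : M ≤ 1 + q ψ := by
    have hM3 : M ^ 3 ≤ (1 + q ψ) ^ 3 := by
      rw [hM_def, ← Finset.prod_pow]
      have hterm : ∀ j, (max 1 (a j ^ ((2:ℝ)/3))) ^ 3 = max 1 (a j ^ 2) := by
        intro j
        rw [max_cube (Real.rpow_nonneg (ha j).le _)]
        congr 1
        rw [← Real.rpow_natCast (a j ^ ((2:ℝ)/3)) 3, ← Real.rpow_mul (ha j).le]
        norm_num
      calc (∏ j, (max 1 (a j ^ ((2:ℝ)/3))) ^ 3) = ∏ j, max 1 (a j ^ 2) :=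
            Finset.prod_congr rfl fun j _ => hterm j
        _ ≤ ∏ _j : Fin 3, (1 + q ψ) := by
            refine Finset.prod_le_prod (fun j _ => le_max_of_le_left zero_le_one) fun j _ => ?_
            have : a j ^ 2 ≤ q ψ := by
              rw [hq]
              exact Finset.single_le_sum (f := fun i => a i ^ 2) (fun _ _ => sq_nonneg _)
                (Finset.mem_univ j)
            exact max_le (by linarith) (by linarith)
        _ = (1 + q ψ) ^ 3 := by rw [Finset.prod_const, Finset.card_univ, Fintype.card_fin]
    exact le_of_pow_le_pow_left₀ (by norm_num) (by positivity) hM3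
  have hMpos : 0 < M := lt_of_lt_of_le zero_lt_one hM1
  have hinv2 : (1 + q ψ)⁻¹ ≤ M⁻¹ := by
    exact inv_anti₀ hMpos hMle
  -- combine
  have hcomb : L ψ ≤ (1/3 * ∏ j, a j ^ (-(2:ℝ)/3)) * M⁻¹ := by
    rw [L]
    exact mul_le_mul hinv1 hinv2 (by positivity) (by positivity)
  refine hcomb.trans_eq ?_
  rw [hM_def, ← Finset.prod_inv_distrib, mul_assoc, ← Finset.prod_mul_distrib]
  congr 1
  refine Finset.prod_congr rfl fun j _ => ?_
  rw [hfun_eq (ha j)]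
  rfl

/-! ### Rescaled integrands -/

def Fd (lam : ℝ) : (Fin 3 → ℝ) → ℝ :=
  (cube 3).indicator fun φ => lam * ((Phi 3 φ)⁻¹ * (lam + Phi 3 φ)⁻¹)

def Jfun (lam : ℝ) : (Fin 3 → ℝ) → ℝ :=
  ((fun ψ : Fin 3 → ℝ => Real.sqrt lam • ψ) ⁻¹' cube 3).indicator
    fun ψ => (Phi 3 (Real.sqrt lam • ψ) / lam)⁻¹ * (1 + Phi 3 (Real.sqrt lam • ψ) / lam)⁻¹

lemma Fd_smul {lam : ℝ} (hlam : 0 < lam) (ψ : Fin 3 → ℝ) :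
    Fd lam (Real.sqrt lam • ψ) = lam⁻¹ * Jfun lam ψ := by
  unfold Fd Jfun
  classical
  rw [Set.indicator_apply, Set.indicator_apply]
  have hmem : (Real.sqrt lam • ψ ∈ cube 3)
      ↔ (ψ ∈ (fun ψ : Fin 3 → ℝ => Real.sqrt lam • ψ) ⁻¹' cube 3) := Iff.rfl
  split_ifs with h h' h'
  · set a := Phi 3 (Real.sqrt lam • ψ) with ha_def
    have ha : 0 ≤ a := Phi_nonneg 3 _
    by_cases ha0 : a = 0
    · simp [ha0]
    · have h1 : lam + a ≠ 0 := by positivity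
      have h2 : lam ≠ 0 := hlam.ne'
      have h3 : (1 : ℝ) + a / lam ≠ 0 := by positivity
      field_simp
  · exact absurd (hmem.mp h) h'
  · exact absurd (hmem.mpr h') h
  · simp

lemma measurable_Jfun (lam : ℝ) : Measurable (Jfun lam) := by
  unfold Jfun
  have hc : Continuous fun ψ : Fin 3 → ℝ => Phi 3 (Real.sqrt lam • ψ) :=
    (continuous_Phi 3).comp (continuous_const_smul _)
  refine Measurable.indicator ?_ ?_
  · exact (((hc.measurable.div_const lam).inv).mul
      ((measurable_const.add (hc.measurable.div_const lam)).inv))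
  · exact (continuous_const_smul _).measurable measurableSet_cube

lemma Jfun_nonneg {lam : ℝ} (hlam : 0 < lam) (ψ : Fin 3 → ℝ) : 0 ≤ Jfun lam ψ := by
  unfold Jfun
  refine Set.indicator_nonneg (fun s _ => ?_) ψ
  have h1 : 0 ≤ Phi 3 (Real.sqrt lam • s) / lam := div_nonneg (Phi_nonneg 3 _) hlam.le
  positivity

/-! ### Integrability on the cube -/

lemma integrableOn_invPhi {lam : ℝ} (hlam : 0 ≤ lam) :
    IntegrableOn (fun φ => (lam + Phi 3 φ)⁻¹) (cube 3) := by
  have hb : Integrable (fun ψ : Fin 3 → ℝ =>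
      (π ^ 2 / 4 * (1 + 3 * π ^ 2) * (1/3)) * ∏ j, hfun (ψ j)) := by
    have h1 : Integrable (fun ψ : Fin 3 → ℝ => ∏ j, hfun (ψ j)) := by
      have := integrable_prod_hfun (c := 1) one_ne_zero
      simpa using this
    exact h1.const_mul _
  refine Integrable.mono' hb.integrableOn
    (((continuous_const.add (continuous_Phi 3)).measurable.inv).aestronglyMeasurable) ?_
  rw [ae_restrict_iff' measurableSet_cube]
  filter_upwards [ae_ne] with ψ hψ hmem
  have hqpos : 0 < q ψ := q_pos hψ
  have hπ := Real.pi_pos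
  have hkq : 0 < 4 / π ^ 2 * q ψ := by positivity
  have h1 : 4 / π ^ 2 * q ψ ≤ lam + Phi 3 ψ := le_add_of_nonneg_of_le hlam (k_q_le_Phi hmem)
  have hpos : 0 < lam + Phi 3 ψ := lt_of_lt_of_le hkq h1
  rw [Real.norm_eq_abs, abs_of_nonneg (inv_nonneg.mpr hpos.le)]
  have hqle : q ψ ≤ 3 * π ^ 2 := by
    rw [q]
    calc ∑ j, ψ j ^ 2 ≤ ∑ _j : Fin 3, π ^ 2 := by
          refine Finset.sum_le_sum fun j _ => ?_
          have hj : ψ j ∈ Set.Icc (-π) π := hmem j (Set.mem_univ j)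
          have : |ψ j| ≤ π := abs_le.mpr ⟨hj.1, hj.2⟩
          calc ψ j ^ 2 = |ψ j| ^ 2 := (sq_abs _).symm
            _ ≤ π ^ 2 := by nlinarith [abs_nonneg (ψ j)]
      _ = 3 * π ^ 2 := by
          rw [Finset.sum_const, Finset.card_univ, Fintype.card_fin, nsmul_eq_mul]
          norm_num
  have hL : L ψ ≤ (1/3) * ∏ j, hfun (ψ j) := L_le_prod hψ
  calc (lam + Phi 3 ψ)⁻¹ ≤ (4 / π ^ 2 * q ψ)⁻¹ := inv_anti₀ hkq h1
    _ = π ^ 2 / 4 * (q ψ)⁻¹ := by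
        rw [mul_inv]
        congr 1
        rw [← one_div, one_div_div]
    _ ≤ π ^ 2 / 4 * ((1 + 3 * π ^ 2) * ((q ψ)⁻¹ * (1 + q ψ)⁻¹)) := by
        refine mul_le_mul_of_nonneg_left ?_ (by positivity)
        have h2 : (1 + q ψ)⁻¹ * (1 + q ψ) = 1 := inv_mul_cancel₀ (by positivity)
        have h3 : 1 + q ψ ≤ 1 + 3 * π ^ 2 := by linarith
        calc (q ψ)⁻¹ = (q ψ)⁻¹ * ((1 + q ψ)⁻¹ * (1 + q ψ)) := by rw [h2, mul_one]
          _ = (1 + q ψ) * ((q ψ)⁻¹ * (1 + q ψ)⁻¹) := by ring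
          _ ≤ (1 + 3 * π ^ 2) * ((q ψ)⁻¹ * (1 + q ψ)⁻¹) := by
              refine mul_le_mul_of_nonneg_right h3 (by positivity)
    _ ≤ π ^ 2 / 4 * ((1 + 3 * π ^ 2) * ((1/3) * ∏ j, hfun (ψ j))) := by
        refine mul_le_mul_of_nonneg_left ?_ (by positivity)
        exact mul_le_mul_of_nonneg_left hL (by positivity)
    _ = π ^ 2 / 4 * (1 + 3 * π ^ 2) * (1/3) * ∏ j, hfun (ψ j) := by ring

/-! ### The difference identity -/

lemma Ir_sub {lam : ℝ} (hlam : 0 < lam) :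
    Ir 3 0 - Ir 3 lam = ((2 * π) ^ 3)⁻¹ * ∫ φ, Fd lam φ := by
  rw [Ir, Ir, ← mul_sub]
  congr 1
  have hsub := MeasureTheory.integral_sub (μ := volume.restrict (cube 3))
    (integrableOn_invPhi (lam := 0) le_rfl) (integrableOn_invPhi hlam.le)
  rw [← hsub, Fd, ← MeasureTheory.integral_indicator measurableSet_cube]
  refine MeasureTheory.integral_congr_ae ?_
  filter_upwards [ae_ne] with φ hφ
  classical
  rw [Set.indicator_apply, Set.indicator_apply]
  split_ifs with hmem
  · have hπ := Real.pi_pos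
    have hP : 0 < Phi 3 φ := by
      have hq := q_pos hφ
      have h1 : 0 < 4 / π ^ 2 * q φ := by positivity
      exact lt_of_lt_of_le h1 (k_q_le_Phi hmem)
    have h2 : lam + Phi 3 φ ≠ 0 := by positivity
    rw [zero_add]
    field_simp
    ring
  · rfl

/-! ### The scaling identity -/

lemma integral_Fd {lam : ℝ} (hlam : 0 < lam) :
    ∫ φ, Fd lam φ = Real.sqrt lam * ∫ ψ, Jfun lam ψ := by
  have h3 : Module.finrank ℝ (Fin 3 → ℝ) = 3 := by simp
  have hs : 0 < Real.sqrt lam := Real.sqrt_pos.mpr hlam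
  have hkey := MeasureTheory.Measure.integral_comp_smul (volume : Measure (Fin 3 → ℝ))
    (Fd lam) (Real.sqrt lam)
  rw [h3, abs_of_pos (by positivity), smul_eq_mul] at hkey
  have h2 : ∫ x, Fd lam (Real.sqrt lam • x) = lam⁻¹ * ∫ x, Jfun lam x := by
    simp_rw [Fd_smul hlam]
    exact MeasureTheory.integral_const_mul _ _
  rw [h2] at hkey
  have hcube : Real.sqrt lam ^ 3 = lam * Real.sqrt lam := by
    rw [pow_succ, Real.sq_sqrt hlam.le]
  have hne : (Real.sqrt lam ^ 3 : ℝ) ≠ 0 := by positivity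
  calc ∫ φ, Fd lam φ = Real.sqrt lam ^ 3 * ((Real.sqrt lam ^ 3)⁻¹ * ∫ φ, Fd lam φ) := by
        field_simp
    _ = Real.sqrt lam ^ 3 * (lam⁻¹ * ∫ x, Jfun lam x) := by rw [← hkey]
    _ = Real.sqrt lam * ∫ x, Jfun lam x := by
        rw [hcube]
        field_simp

lemma key_eq {lam : ℝ} (hlam : 0 < lam) :
    (Ir 3 0 - Ir 3 lam) / Real.sqrt lam = ((2 * π) ^ 3)⁻¹ * ∫ ψ, Jfun lam ψ := by
  rw [Ir_sub hlam, integral_Fd hlam]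
  have hs : Real.sqrt lam ≠ 0 := (Real.sqrt_pos.mpr hlam).ne'
  field_simp

/-! ### Pointwise convergence -/

lemma tendsto_sqrt_zero : Tendsto (fun lam : ℝ => Real.sqrt lam)
    (nhdsWithin 0 (Set.Ioi 0)) (nhds 0) := by
  have := (Real.continuous_sqrt.tendsto 0).mono_left (nhdsWithin_le_nhds (s := Set.Ioi (0:ℝ)))
  simpa using this

lemma tendsto_cos_term (c : ℝ) :
    Tendsto (fun lam : ℝ => 2 * (1 - Real.cos (Real.sqrt lam * c)) / lam)
      (nhdsWithin 0 (Set.Ioi 0)) (nhds (c ^ 2)) := by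
  rw [← tendsto_sub_nhds_zero_iff]
  have habs : Tendsto (fun lam : ℝ => |Real.sqrt lam * c|)
      (nhdsWithin 0 (Set.Ioi 0)) (nhds 0) := by
    have := (tendsto_sqrt_zero.mul_const c).abs
    simpa using this
  have hev : ∀ᶠ lam in nhdsWithin (0:ℝ) (Set.Ioi 0), |Real.sqrt lam * c| ≤ 1 :=
    (habs.eventually_lt_const zero_lt_one).mono fun lam h => h.le
  apply squeeze_zero_norm' (a := fun lam => lam * c ^ 4 * (5/48))
  · filter_upwards [hev, eventually_mem_nhdsWithin] with lam h1 h0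
    have h0' : 0 < lam := h0
    have hx : Real.sqrt lam ^ 2 = lam := Real.sq_sqrt h0'.le
    set x := Real.sqrt lam * c with hxdef
    have hx2 : x ^ 2 = lam * c ^ 2 := by rw [hxdef, mul_pow, hx]
    have hx4 : x ^ 4 = lam ^ 2 * c ^ 4 := by
      have : x ^ 4 = (x ^ 2) ^ 2 := by ring
      rw [this, hx2]; ring
    have heq : 2 * (1 - Real.cos x) / lam - c ^ 2
        = (2 / lam) * ((1 - x ^ 2 / 2) - Real.cos x) := by
      rw [hx2]
      field_simp
      ring
    rw [heq, Real.norm_eq_abs, abs_mul, abs_of_pos (by positivity : (0:ℝ) < 2 / lam),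
      abs_sub_comm]
    have hb := Real.cos_bound h1
    calc 2 / lam * |Real.cos x - (1 - x ^ 2 / 2)| ≤ 2 / lam * (|x| ^ 4 * (5/96)) := by
          exact mul_le_mul_of_nonneg_left hb (by positivity)
      _ = lam * c ^ 4 * (5/48) := by
          rw [← abs_pow, abs_of_nonneg (by positivity : (0:ℝ) ≤ x ^ 4), hx4]
          field_simp
          ring
  · have hco : Continuous fun lam : ℝ => lam * c ^ 4 * (5/48) := by fun_prop
    have : Tendsto (fun lam : ℝ => lam * c ^ 4 * (5/48)) (nhds 0) (nhds 0) := by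
      simpa using hco.tendsto 0
    exact this.mono_left nhdsWithin_le_nhds

lemma tendsto_Jfun {ψ : Fin 3 → ℝ} (hψ : ∀ j, ψ j ≠ 0) :
    Tendsto (fun lam => Jfun lam ψ) (nhdsWithin 0 (Set.Ioi 0)) (nhds (L ψ)) := by
  have hq : 0 < q ψ := q_pos hψ
  -- convergence of the symbol quotient
  have hb : Tendsto (fun lam : ℝ => Phi 3 (Real.sqrt lam • ψ) / lam)
      (nhdsWithin 0 (Set.Ioi 0)) (nhds (q ψ)) := by
    have hform : ∀ lam : ℝ, Phi 3 (Real.sqrt lam • ψ) / lam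
        = ∑ j, 2 * (1 - Real.cos (Real.sqrt lam * ψ j)) / lam := by
      intro lam
      rw [Phi, Finset.mul_sum, Finset.sum_div]
      simp [Pi.smul_apply, smul_eq_mul]
    have hsum := tendsto_finset_sum (Finset.univ : Finset (Fin 3))
      (fun j _ => tendsto_cos_term (ψ j))
    rw [show (∑ j, (ψ j) ^ 2) = q ψ from rfl] at hsum
    exact hsum.congr fun lam => (hform lam).symm
  have hcont : ContinuousAt (fun b : ℝ => b⁻¹ * (1 + b)⁻¹) (q ψ) := by
    have h1 : ContinuousAt (fun b : ℝ => b⁻¹) (q ψ) := continuousAt_inv₀ hq.ne'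
    have h2 : ContinuousAt (fun b : ℝ => (1 + b)⁻¹) (q ψ) := by
      have : (1 : ℝ) + q ψ ≠ 0 := by positivity
      exact (continuousAt_id.const_add 1).inv₀ this
    exact h1.mul h2
  have hmain : Tendsto (fun lam : ℝ =>
      (Phi 3 (Real.sqrt lam • ψ) / lam)⁻¹ * (1 + Phi 3 (Real.sqrt lam • ψ) / lam)⁻¹)
      (nhdsWithin 0 (Set.Ioi 0)) (nhds (L ψ)) := hcont.tendsto.comp hb
  refine hmain.congr' ?_
  -- eventually the indicator is trivial
  have hev : ∀ᶠ lam in nhdsWithin (0:ℝ) (Set.Ioi 0), Real.sqrt lam • ψ ∈ cube 3 := by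
    have hcoord : ∀ j : Fin 3, ∀ᶠ lam in nhdsWithin (0:ℝ) (Set.Ioi 0),
        |Real.sqrt lam * ψ j| ≤ π := by
      intro j
      have habs : Tendsto (fun lam : ℝ => |Real.sqrt lam * ψ j|)
          (nhdsWithin 0 (Set.Ioi 0)) (nhds 0) := by
        have := (tendsto_sqrt_zero.mul_const (ψ j)).abs
        simpa using this
      exact (habs.eventually_lt_const Real.pi_pos).mono fun lam h => h.le
    have hall := (Filter.eventually_all (ι := Fin 3)).mpr hcoord
    filter_upwards [hall] with lam hlam
    intro j _
    have := abs_le.mp (hlam j)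
    exact ⟨this.1, this.2⟩
  filter_upwards [hev] with lam hmem
  rw [Jfun, Set.indicator_of_mem (Set.mem_preimage.mpr hmem)]

/-! ### Uniform bound -/

def Dfun (ψ : Fin 3 → ℝ) : ℝ := (1/3) * ∏ j, hfun (Real.sqrt (4 / π ^ 2) * ψ j)

lemma Dfun_nonneg (ψ : Fin 3 → ℝ) : 0 ≤ Dfun ψ := by
  unfold Dfun
  have : 0 ≤ ∏ j, hfun (Real.sqrt (4 / π ^ 2) * ψ j) :=
    Finset.prod_nonneg fun j _ => hfun_nonneg _
  linarith

lemma integrable_Dfun : Integrable Dfun := by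
  have hπ := Real.pi_pos
  have hc : Real.sqrt (4 / π ^ 2) ≠ 0 := by
    refine (Real.sqrt_pos.mpr (by positivity)).ne'
  exact (integrable_prod_hfun hc).const_mul _

lemma bound_Jfun {lam : ℝ} (hlam : 0 < lam) {ψ : Fin 3 → ℝ} (hψ : ∀ j, ψ j ≠ 0) :
    ‖Jfun lam ψ‖ ≤ Dfun ψ := by
  classical
  have hπ := Real.pi_pos
  rw [Real.norm_eq_abs, abs_of_nonneg (Jfun_nonneg hlam ψ)]
  rw [Jfun, Set.indicator_apply]
  split_ifs with hmem
  · set b := Phi 3 (Real.sqrt lam • ψ) / lam with hb_def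
    have hk : (0:ℝ) < 4 / π ^ 2 := by positivity
    have hu : (0:ℝ) < 4 / π ^ 2 * q ψ := by
      have := q_pos hψ; positivity
    have hble : 4 / π ^ 2 * q ψ ≤ b := by
      rw [hb_def]
      have h1 := k_q_le_Phi (Set.mem_preimage.mp hmem)
      rw [q_smul, Real.sq_sqrt hlam.le] at h1
      rw [le_div_iff₀ hlam]
      calc 4 / π ^ 2 * q ψ * lam = 4 / π ^ 2 * (lam * q ψ) := by ring
        _ ≤ Phi 3 (Real.sqrt lam • ψ) := h1
    have hbpos : 0 < b := lt_of_lt_of_le hu hble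
    -- monotonicity
    have hmono : b⁻¹ * (1 + b)⁻¹
        ≤ (4 / π ^ 2 * q ψ)⁻¹ * (1 + 4 / π ^ 2 * q ψ)⁻¹ := by
      refine mul_le_mul (inv_anti₀ hu hble) (inv_anti₀ (by positivity) (by linarith))
        (by positivity) (by positivity)
    -- identification with L at the rescaled point
    have hLpt : (4 / π ^ 2 * q ψ)⁻¹ * (1 + 4 / π ^ 2 * q ψ)⁻¹
        = L (Real.sqrt (4 / π ^ 2) • ψ) := by
      rw [L, q_smul, Real.sq_sqrt hk.le]
    have hcoords : ∀ j, (Real.sqrt (4 / π ^ 2) • ψ) j ≠ 0 := by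
      intro j
      have hs : Real.sqrt (4 / π ^ 2) ≠ 0 := (Real.sqrt_pos.mpr hk).ne'
      simp only [Pi.smul_apply, smul_eq_mul]
      exact mul_ne_zero hs (hψ j)
    have hLle := L_le_prod hcoords
    calc b⁻¹ * (1 + b)⁻¹ ≤ (4 / π ^ 2 * q ψ)⁻¹ * (1 + 4 / π ^ 2 * q ψ)⁻¹ := hmono
      _ = L (Real.sqrt (4 / π ^ 2) • ψ) := hLpt
      _ ≤ 1/3 * ∏ j, hfun ((Real.sqrt (4 / π ^ 2) • ψ) j) := hLle
      _ = Dfun ψ := by simp [Dfun, Pi.smul_apply, smul_eq_mul]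
  · exact Dfun_nonneg ψ

/-! ### Dominated convergence -/

lemma tendsto_integral_Jfun :
    Tendsto (fun lam => ∫ ψ, Jfun lam ψ) (nhdsWithin (0:ℝ) (Set.Ioi 0))
      (nhds (∫ ψ, L ψ)) := by
  refine MeasureTheory.tendsto_integral_filter_of_dominated_convergence Dfun ?_ ?_
    integrable_Dfun ?_
  · exact Filter.Eventually.of_forall fun lam => (measurable_Jfun lam).aestronglyMeasurable
  · filter_upwards [eventually_mem_nhdsWithin] with lam hlam
    filter_upwards [ae_ne] with ψ hψ
    exact bound_Jfun hlam hψ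
  · filter_upwards [ae_ne] with ψ hψ
    exact tendsto_Jfun hψ

/-! ### Value of the limit integral -/

lemma integral_L : ∫ ψ, L ψ = 2 * π ^ 2 := by
  have hπ := Real.pi_pos
  have he := (EuclideanSpace.volume_preserving_symm_measurableEquiv_toLp (Fin 3)).integral_comp
    (MeasurableEquiv.toLp 2 (Fin 3 → ℝ)).symm.measurableEmbedding L
  rw [← he]
  have hL : ∀ x : EuclideanSpace ℝ (Fin 3),
      L ((MeasurableEquiv.toLp 2 (Fin 3 → ℝ)).symm x)
        = (fun r : ℝ => (r ^ 2)⁻¹ * (1 + r ^ 2)⁻¹) ‖x‖ := by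
    intro x
    have hx : q ((MeasurableEquiv.toLp 2 (Fin 3 → ℝ)).symm x) = ‖x‖ ^ 2 := by
      rw [EuclideanSpace.norm_eq, Real.sq_sqrt (by positivity)]
      simp [q, Real.norm_eq_abs, sq_abs]
    rw [L, hx]
  simp_rw [hL]
  rw [MeasureTheory.integral_fun_norm_addHaar (volume : Measure (EuclideanSpace ℝ (Fin 3)))
    (fun r : ℝ => (r ^ 2)⁻¹ * (1 + r ^ 2)⁻¹)]
  rw [finrank_euclideanSpace_fin]
  have hint : (∫ y in Set.Ioi (0:ℝ), y ^ (3 - 1) • ((y ^ 2)⁻¹ * (1 + y ^ 2)⁻¹)) = π / 2 := by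
    rw [show (3 - 1 : ℕ) = 2 from rfl]
    have hcong : ∀ y ∈ Set.Ioi (0:ℝ),
        y ^ 2 • ((y ^ 2)⁻¹ * (1 + y ^ 2)⁻¹) = (1 + y ^ 2)⁻¹ := by
      intro y hy
      have hy2 : (y:ℝ) ^ 2 ≠ 0 := pow_ne_zero _ (ne_of_gt hy)
      rw [smul_eq_mul, ← mul_assoc, mul_inv_cancel₀ hy2, one_mul]
    rw [MeasureTheory.setIntegral_congr_fun measurableSet_Ioi hcong]
    rw [integral_Ioi_inv_one_add_sq]
    simp
  have hball : (volume (Metric.ball (0 : EuclideanSpace ℝ (Fin 3)) 1)).toReal = π * (4/3) := by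
    rw [EuclideanSpace.volume_ball]
    have hΓ : Real.Gamma ((Fintype.card (Fin 3) : ℝ) / 2 + 1) = 3/4 * Real.sqrt π := by
      rw [Fintype.card_fin]
      push_cast
      rw [show (3:ℝ)/2 = 1/2 + 1 by norm_num, Real.Gamma_add_one (by norm_num),
        Real.Gamma_add_one (by norm_num), Real.Gamma_one_half_eq]
      ring
    rw [hΓ]
    have hs : Real.sqrt π ≠ 0 := (Real.sqrt_pos.mpr hπ).ne'
    have hs2 : Real.sqrt π ^ 2 = π := Real.sq_sqrt hπ.le
    have harg : Real.sqrt π ^ Fintype.card (Fin 3) / (3/4 * Real.sqrt π) = π * (4/3) := by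
      rw [Fintype.card_fin]
      have h3 : Real.sqrt π ^ 3 = π * Real.sqrt π := by rw [pow_succ, hs2]
      rw [h3]
      field_simp
    rw [harg]
    simp [ENNReal.toReal_mul, ENNReal.toReal_pow, ENNReal.toReal_ofReal (by positivity : (0:ℝ) ≤ π * (4/3))]
  rw [hint, measureReal_def, hball]
  rw [smul_eq_mul, nsmul_eq_mul]
  push_cast
  ring

end IA

/-- for `d = 3`, `I(λ) = I(0) - √λ/(4π) + o(√λ)` as `λ → 0+`, i.e.
`(I(0) - I(λ))/√λ → 1/(4π)`. -/
theorem I_asymptotics_dim3 :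
    Tendsto (fun lam : ℝ => (Ir 3 0 - Ir 3 lam) / Real.sqrt lam)
      (nhdsWithin 0 (Set.Ioi 0)) (nhds (1 / (4 * π))) := by
  have hπ := Real.pi_pos
  have h1 : Tendsto (fun lam => ((2 * π) ^ 3)⁻¹ * ∫ ψ, IA.Jfun lam ψ)
      (nhdsWithin (0:ℝ) (Set.Ioi 0)) (nhds (((2 * π) ^ 3)⁻¹ * (2 * π ^ 2))) := by
    have := IA.tendsto_integral_Jfun
    rw [IA.integral_L] at this
    exact this.const_mul _
  have h2 : ((2 * π) ^ 3)⁻¹ * (2 * π ^ 2) = 1 / (4 * π) := by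
    field_simp
    ring
  rw [h2] at h1
  refine h1.congr' ?_
  filter_upwards [eventually_mem_nhdsWithin] with lam hlam
  exact (IA.key_eq hlam).symm

end
end
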